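/- Let Z_n = (z_n, w_n) ∈ ℂ × ℂ^{N-1} be a sequence in the unit ball B^N of ℂ^N converging to the boundary point X = (1,0). Suppose: (a) ‖w_n‖²/(1-|z_n|²) → 0 (the sequence is special); (b) z_n → 1 non-tangentially in the unit disk, i.e., |1-z_n|/(1-|z_n|) is bounded; and (c) (1 - z_{n+1})/(1 - z_n) → 1. Then the pseudo-hyperbolic distance in the ball satisfies d_{B^N}(Z_n, Z_{n+1}) → 0. -/

import Mathlib

set_option maxHeartbeats 1000000

open Complex Filter

lemma disk_identity (a b : ℂ) :
    (‖1 - a * (starRingEnd ℂ) b‖)^2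
      = (1 - (‖a‖)^2) * (1 - (‖b‖)^2) + (‖a - b‖)^2 := by
  rw [Complex.sq_norm, Complex.sq_norm, Complex.sq_norm, Complex.sq_norm]
  simp only [Complex.normSq_apply, Complex.mul_re, Complex.mul_im, Complex.sub_re,
    Complex.sub_im, Complex.one_re, Complex.one_im, Complex.conj_re, Complex.conj_im]
  ring

lemma lower_ineq (p q p' q' c AB N : ℝ)
    (hb : p^2+q^2 < 1) (hb' : p'^2+q'^2 < 1)
    (hc0 : 0 ≤ c) (hc : c ≤ p*p'+q*q')
    (hABc : 1 - c ≤ AB) (hAB0 : 0 ≤ AB)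
    (hN : N = (1-(p^2+q^2))*(1-(p'^2+q'^2))) :
    0 ≤ 1 - N/AB^2 := by
  have hcs : (p*p'+q*q')^2 ≤ (p^2+q^2)*(p'^2+q'^2) := by nlinarith [sq_nonneg (p*q'-q*p')]
  have hd1 : p*p'+q*q' < 1 := by nlinarith
  have hc1 : c < 1 := lt_of_le_of_lt hc hd1
  have hNd : N ≤ (1-(p*p'+q*q'))^2 := by
    rw [hN]
    nlinarith [sq_nonneg ((p-p')*p' + (q-q')*q'), sq_nonneg ((p-p')*q' - (q-q')*p'),
      sq_nonneg (p-p'), sq_nonneg (q-q')]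
  have hNc : N ≤ (1-c)^2 := by nlinarith
  have hABpos : 0 < AB := by nlinarith
  have hD : (1-c)^2 ≤ AB^2 := by nlinarith
  have hDpos : 0 < AB^2 := by positivity
  have : N / AB^2 ≤ 1 := (div_le_one hDpos).mpr (hNc.trans hD)
  linarith

lemma main_ineq (M s s' t t' p p' q q' e e' R L mu AB N : ℝ)
    (hM : 0 < M)
    (hs : 0 < s) (hs' : 0 < s')
    (htM : t ≤ M*s) (ht'M : t' ≤ M*s')
    (hst : s ≤ t) (hs't' : s' ≤ t')
    (he0 : 0 ≤ e) (he0' : 0 ≤ e')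
    (hp2 : 1 - p^2 ≤ 2*s) (hp2' : 1 - p'^2 ≤ 2*s')
    (hq2 : q^2 ≤ 2*e*s) (hq2' : q'^2 ≤ 2*e'*s')
    (hq20 : 0 ≤ q^2) (hq20' : 0 ≤ q'^2)
    (hmu0 : 0 ≤ mu) (hmu : mu^2 ≤ q^2*q'^2)
    (hL0 : 0 ≤ L) (hL : L ≤ t + t' + t*t')
    (hAB : s + s' - t*t' - mu ≤ AB)
    (hABL : AB ≤ L + mu)
    (hN : N = (1-(p^2+q^2))*(1-(p'^2+q'^2)))
    (hball' : p'^2+q'^2 < 1)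
    (hp2pos : 0 < 1 - p^2)
    (hdisk : L^2 = (1-p^2)*(1-p'^2) + t^2*R^2)
    (hR : 0 ≤ R)
    (he : e ≤ 1/100) (he' : e' ≤ 1/100)
    (hS : s + s' ≤ 1/(8*(M+1)^2)) :
    1 - N/AB^2 ≤ 4*(M^2*R^2 + (2*M+3)*(e+e') + e*e') := by
  have hSpos : 0 < s + s' := by positivity
  have h8 : (0:ℝ) < 8*(M+1)^2 := by positivity
  have h1 : (s+s') * (8*(M+1)^2) ≤ 1 := by rw [← le_div_iff₀ h8]; exact hS
  have hMS : M^2*(s+s') ≤ 1/8 := by nlinarith only [h1, hSpos, hM]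
  have ht0 : 0 < t := lt_of_lt_of_le hs hst
  have ht0' : 0 < t' := lt_of_lt_of_le hs' hs't'
  have htt' : t*t' ≤ M^2*(s*s') := by
    have := mul_le_mul htM ht'M ht0'.le (by positivity : (0:ℝ) ≤ M*s)
    nlinarith only [this]
  have hss'S : s*s' ≤ (s+s')^2/4 := by nlinarith only [sq_nonneg (s-s')]
  have htt'2 : t*t' ≤ (s+s')/32 := by
    have h2 := mul_le_mul_of_nonneg_left hss'S (by positivity : (0:ℝ) ≤ M^2)
    have h3 := mul_le_mul_of_nonneg_right hMS (by linarith : (0:ℝ) ≤ s+s')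
    nlinarith only [htt', h2, h3, hSpos]
  have m1 : q^2*q'^2 ≤ (2*e*s)*(2*e'*s') :=
    mul_le_mul hq2 hq2' hq20' (by positivity)
  have hqq'2 : q^2*q'^2 ≤ e*e'*(s+s')^2 := by
    have m2 := mul_le_mul_of_nonneg_left hss'S (by positivity : (0:ℝ) ≤ 4*(e*e'))
    nlinarith only [m1, m2]
  have hmuS : mu ≤ e*s + e'*s' := by
    have k1 : mu^2 ≤ (e*s+e'*s')^2 := by
      nlinarith only [m1, hmu, sq_nonneg (e*s - e'*s')]
    nlinarith only [k1, hmu0, mul_nonneg he0 hs.le, mul_nonneg he0' hs'.le]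
  have hmuS2 : mu ≤ (1/100)*(s+s') := by
    nlinarith only [hmuS, he, he', hs, hs',
      mul_le_mul_of_nonneg_right he hs.le, mul_le_mul_of_nonneg_right he' hs'.le]
  have hABlb : (s+s')/2 ≤ AB := by nlinarith only [hAB, htt'2, hmuS2, hSpos]
  have hABpos : 0 < AB := by nlinarith only [hABlb, hSpos]
  have hDlb : (s+s')^2/4 ≤ AB^2 := by nlinarith only [hABlb, hABpos, hSpos]
  have hLS : L ≤ (M+1)*(s+s') := by
    nlinarith only [hL, htM, ht'M, htt'2, hSpos]
  have hDub : AB^2 ≤ L^2 + 2*L*mu + mu^2 := by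
    nlinarith only [hABL, hABpos, hL0, hmu0]
  have hmuSq : mu^2 ≤ e*e'*(s+s')^2 := le_trans hmu hqq'2
  have hA1 : t^2*R^2 ≤ M^2*(s+s')^2*R^2 := by
    have k : t^2 ≤ M^2*(s+s')^2 := by
      nlinarith only [htM, ht0, hs, hs', hM,
        mul_nonneg (mul_nonneg hM.le hM.le) (mul_nonneg hs.le hs'.le),
        mul_nonneg (mul_nonneg hM.le hM.le) (mul_nonneg hs'.le hs'.le)]
    exact mul_le_mul_of_nonneg_right k (sq_nonneg R)
  have hA2 : 2*L*mu ≤ 2*(M+1)*(e+e')*(s+s')^2 := by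
    have k1 : mu ≤ (e+e')*(s+s') := by
      nlinarith only [hmuS, hs, hs', he0, he0',
        mul_le_mul_of_nonneg_left (show s ≤ s+s' by linarith) he0,
        mul_le_mul_of_nonneg_left (show s' ≤ s+s' by linarith) he0']
    have := mul_le_mul hLS k1 hmu0 (by positivity : (0:ℝ) ≤ (M+1)*(s+s'))
    nlinarith only [this]
  have hA4 : (1-p^2)*q'^2 ≤ e'*(s+s')^2 := by
    have k := mul_le_mul hp2 hq2' hq20' (by positivity : (0:ℝ) ≤ 2*s)
    have k2 := mul_le_mul_of_nonneg_left hss'S (by positivity : (0:ℝ) ≤ 4*e')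
    nlinarith only [k, k2]
  have hA5 : q^2*(1-p'^2) ≤ e*(s+s')^2 := by
    have k := mul_le_mul hq2 hp2' (by nlinarith only [hball', hq20'] : (0:ℝ) ≤ 1-p'^2)
      (by positivity : (0:ℝ) ≤ 2*e*s)
    have k2 := mul_le_mul_of_nonneg_left hss'S (by positivity : (0:ℝ) ≤ 4*e)
    nlinarith only [k, k2]
  have hexp : AB^2 - N ≤ t^2*R^2 + 2*L*mu + mu^2 + (1-p^2)*q'^2 + q^2*(1-p'^2) - q^2*q'^2 := by
    nlinarith only [hDub, hdisk, hN]
  have hprod : 0 ≤ q^2*q'^2 := mul_nonneg hq20 hq20'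
  have hDN : AB^2 - N ≤ (s+s')^2*(M^2*R^2 + (2*M+3)*(e+e') + e*e') := by
    nlinarith only [hexp, hA1, hA2, hmuSq, hA4, hA5, hprod]
  have hC0 : 0 ≤ M^2*R^2 + (2*M+3)*(e+e') + e*e' := by positivity
  have hDpos : 0 < AB^2 := by positivity
  rw [show (1:ℝ) - N/AB^2 = (AB^2 - N)/AB^2 by field_simp, div_le_iff₀ hDpos]
  nlinarith only [hDN, mul_le_mul_of_nonneg_left hDlb hC0, hC0]

/-- Core of Theorem 3.8: if a sequence `Z n = (z n, w n)` in the unit ball of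
`ℂ × ℂ^{N-1}` converges to `(1,0)`, is special, its first coordinates tend to `1`
non-tangentially, and `(1 - z (n+1))/(1 - z n) → 1`, then the pseudo-hyperbolic
distance in the ball between consecutive terms tends to `0`. -/
theorem restricted_orbit_zero_step (m : ℕ)
    (z : ℕ → ℂ) (w : ℕ → EuclideanSpace ℂ (Fin m)) (M : ℝ)
    (hball : ∀ n, (‖z n‖) ^ 2 + ‖w n‖ ^ 2 < 1)
    (hne : ∀ n, z n ≠ 1)
    (hzlim : Filter.Tendsto z Filter.atTop (nhds 1))
    (hwlim : Filter.Tendsto w Filter.atTop (nhds 0))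
    (hspecial : Filter.Tendsto
      (fun n => ‖w n‖ ^ 2 / (1 - (‖z n‖) ^ 2)) Filter.atTop (nhds 0))
    (hnontang : ∀ n, ‖1 - z n‖ ≤ M * (1 - ‖z n‖))
    (hratio : Filter.Tendsto (fun n => (1 - z (n + 1)) / (1 - z n))
      Filter.atTop (nhds 1)) :
    Filter.Tendsto
      (fun n => Real.sqrt (1 -
        ((1 - ((‖z n‖) ^ 2 + ‖w n‖ ^ 2)) *
          (1 - ((‖z (n + 1)‖) ^ 2 + ‖w (n + 1)‖ ^ 2))) /
        (‖1 - (z n * (starRingEnd ℂ) (z (n + 1)) +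
          (inner ℂ (w (n + 1)) (w n) : ℂ))‖) ^ 2))
      Filter.atTop (nhds 0) := by
  -- basic pointwise facts
  have habs : ∀ n, ‖z n‖ < 1 := by
    intro n
    have h := hball n
    nlinarith [sq_nonneg ‖w n‖, norm_nonneg (z n)]
  have hrepos : ∀ n, 0 < 1 - (z n).re := by
    intro n; have h1 := Complex.re_le_norm (z n); have h2 := habs n; linarith
  have hp2pos : ∀ n, 0 < 1 - (‖z n‖)^2 := by
    intro n; nlinarith [habs n, norm_nonneg (z n)]
  have hM : 0 < M := by
    have h0 := hnontang 0
    have h1 : 0 < ‖1 - z 0‖ := by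
      rw [norm_pos_iff]; exact sub_ne_zero.mpr (Ne.symm (hne 0))
    nlinarith [habs 0]
  have hE0 : ∀ n, 0 ≤ ‖w n‖^2 / (1 - (‖z n‖)^2) := fun n =>
    div_nonneg (by positivity) (hp2pos n).le
  have htM : ∀ n, ‖1 - z n‖ ≤ M * (1 - (z n).re) := by
    intro n
    have h1 := hnontang n
    have h2 := Complex.re_le_norm (z n)
    nlinarith
  have hst : ∀ n, 1 - (z n).re ≤ ‖1 - z n‖ := by
    intro n
    have h := Complex.re_le_norm (1 - z n)
    simpa [Complex.sub_re] using h
  have hp2 : ∀ n, 1 - (‖z n‖)^2 ≤ 2*(1 - (z n).re) := by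
    intro n
    nlinarith [Complex.re_le_norm (z n), habs n, norm_nonneg (z n),
      sq_nonneg (1 - ‖z n‖)]
  have hq2 : ∀ n, ‖w n‖^2 ≤ 2*(‖w n‖^2/(1 - (‖z n‖)^2))*(1 - (z n).re) := by
    intro n
    have h1 : ‖w n‖^2 = (‖w n‖^2/(1 - (‖z n‖)^2)) * (1 - (‖z n‖)^2) :=
      (div_mul_cancel₀ _ (hp2pos n).ne').symm
    nlinarith [mul_le_mul_of_nonneg_left (hp2 n) (hE0 n), h1]
  have hmun : ∀ n, ‖(inner ℂ (w (n+1)) (w n) : ℂ)‖ ≤ ‖w (n+1)‖ * ‖w n‖ := by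
    intro n; exact norm_inner_le_norm _ _
  have hconj : ∀ n, ‖1 - (starRingEnd ℂ) (z (n+1))‖ = ‖1 - z (n+1)‖ := by
    intro n
    rw [show (1:ℂ) - (starRingEnd ℂ) (z (n+1)) = (starRingEnd ℂ) (1 - z (n+1)) by
      simp [map_sub]]
    exact Complex.norm_conj _
  have hLn : ∀ n, ‖1 - z n * (starRingEnd ℂ) (z (n+1))‖
      ≤ ‖1 - z n‖ + ‖1 - z (n+1)‖
        + ‖1 - z n‖ * ‖1 - z (n+1)‖ := by
    intro n
    have hid : (1:ℂ) - z n * (starRingEnd ℂ) (z (n+1))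
        = ((1 - z n) + (1 - (starRingEnd ℂ) (z (n+1))))
          + (-((1 - z n)*(1 - (starRingEnd ℂ) (z (n+1))))) := by ring
    rw [hid]
    refine le_trans (norm_add_le _ _) ?_
    rw [norm_neg, norm_mul, hconj n]
    refine le_trans (add_le_add_left (norm_add_le _ _) _) ?_
    rw [hconj n]
  have hren : ∀ n, (1 - (z n).re) + (1 - (z (n+1)).re)
      - ‖1 - z n‖ * ‖1 - z (n+1)‖
      - ‖(inner ℂ (w (n+1)) (w n) : ℂ)‖
      ≤ ‖1 - (z n * (starRingEnd ℂ) (z (n+1)) + (inner ℂ (w (n+1)) (w n) : ℂ))‖ := by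
    intro n
    refine le_trans ?_ (Complex.re_le_norm _)
    have hid : (1:ℂ) - (z n * (starRingEnd ℂ) (z (n+1)) + (inner ℂ (w (n+1)) (w n) : ℂ))
        = ((1 - z n) + (1 - (starRingEnd ℂ) (z (n+1))))
          - (1 - z n)*(1 - (starRingEnd ℂ) (z (n+1)))
          - (inner ℂ (w (n+1)) (w n) : ℂ) := by ring
    rw [hid]
    simp only [Complex.sub_re, Complex.add_re, Complex.one_re, Complex.conj_re]
    have h1 : ((1 - z n)*(1 - (starRingEnd ℂ) (z (n+1)))).re
        ≤ ‖1 - z n‖ * ‖1 - z (n+1)‖ := by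
      refine le_trans (Complex.re_le_norm _) ?_
      rw [norm_mul, hconj n]
    have h2 : ((inner ℂ (w (n+1)) (w n) : ℂ)).re ≤ ‖(inner ℂ (w (n+1)) (w n) : ℂ)‖ :=
      Complex.re_le_norm _
    have h3 : (1 - (starRingEnd ℂ) (z (n+1))).re = 1 - (z (n+1)).re := by
      simp [Complex.sub_re, Complex.conj_re]
    simp only [Complex.sub_re, Complex.one_re, Complex.conj_re] at h3 ⊢
    linarith
  have hABLn : ∀ n, ‖1 - (z n * (starRingEnd ℂ) (z (n+1)) + (inner ℂ (w (n+1)) (w n) : ℂ))‖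
      ≤ ‖1 - z n * (starRingEnd ℂ) (z (n+1))‖
        + ‖(inner ℂ (w (n+1)) (w n) : ℂ)‖ := by
    intro n
    have hid : (1:ℂ) - (z n * (starRingEnd ℂ) (z (n+1)) + (inner ℂ (w (n+1)) (w n) : ℂ))
        = (1 - z n * (starRingEnd ℂ) (z (n+1))) + (-(inner ℂ (w (n+1)) (w n) : ℂ)) := by ring
    rw [hid]
    refine le_trans (norm_add_le _ _) ?_
    rw [norm_neg]
  have hcn : ∀ n, ‖z n * (starRingEnd ℂ) (z (n+1)) + (inner ℂ (w (n+1)) (w n) : ℂ)‖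
      ≤ ‖z n‖ * ‖z (n+1)‖ + ‖w n‖ * ‖w (n+1)‖ := by
    intro n
    refine le_trans (norm_add_le _ _) ?_
    rw [norm_mul, Complex.norm_conj]
    have := hmun n
    linarith [hmun n]
  have hzsub : ∀ n, ‖z n - z (n+1)‖
      = ‖1 - z n‖ * ‖(1 - z (n+1))/(1 - z n) - 1‖ := by
    intro n
    rw [← norm_mul]
    congr 1
    have hzne : (1:ℂ) - z n ≠ 0 := sub_ne_zero.mpr (Ne.symm (hne n))
    field_simp
    ring
  have hdiskn : ∀ n, (‖1 - z n * (starRingEnd ℂ) (z (n+1))‖)^2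
      = (1 - (‖z n‖)^2)*(1 - (‖z (n+1)‖)^2)
        + (‖1 - z n‖)^2 * (‖(1 - z (n+1))/(1 - z n) - 1‖)^2 := by
    intro n
    rw [disk_identity, hzsub n, mul_pow]
  -- tendsto facts
  have hzre1 : Tendsto (fun n => (z n).re) atTop (nhds 1) := by
    have := (Complex.continuous_re.tendsto 1).comp hzlim
    simpa [Function.comp_def] using this
  have hstend : Tendsto (fun n => 1 - (z n).re) atTop (nhds 0) := by
    have := (tendsto_const_nhds (x := (1:ℝ)) (f := atTop)).sub hzre1
    simpa using this
  have hstend' : Tendsto (fun n => 1 - (z (n+1)).re) atTop (nhds 0) := by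
    simpa [Function.comp_def] using hstend.comp (tendsto_add_atTop_nat 1)
  have hStend : Tendsto (fun n => (1 - (z n).re) + (1 - (z (n+1)).re)) atTop (nhds 0) := by
    simpa using hstend.add hstend'
  have hEtend' : Tendsto (fun n => ‖w (n+1)‖ ^ 2 / (1 - (‖z (n+1)‖) ^ 2))
      atTop (nhds 0) := by
    simpa [Function.comp_def] using hspecial.comp (tendsto_add_atTop_nat 1)
  have hRtend : Tendsto (fun n => ‖(1 - z (n+1))/(1 - z n) - 1‖) atTop (nhds 0) := by
    have h1 : Tendsto (fun n => (1 - z (n+1))/(1 - z n) - 1) atTop (nhds 0) := by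
      simpa using hratio.sub (tendsto_const_nhds (x := (1:ℂ)))
    have := (continuous_norm.tendsto (0:ℂ)).comp h1
    simpa [Function.comp_def] using this
  -- the squeeze
  have hmain : Tendsto
      (fun n => 1 -
        ((1 - ((‖z n‖) ^ 2 + ‖w n‖ ^ 2)) *
          (1 - ((‖z (n + 1)‖) ^ 2 + ‖w (n + 1)‖ ^ 2))) /
        (‖1 - (z n * (starRingEnd ℂ) (z (n + 1)) +
          (inner ℂ (w (n + 1)) (w n) : ℂ))‖) ^ 2)
      atTop (nhds 0) := by
    apply squeeze_zero' (g := fun n => 4*(M^2*(‖(1 - z (n+1))/(1 - z n) - 1‖)^2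
      + (2*M+3)*((‖w n‖ ^ 2 / (1 - (‖z n‖) ^ 2))
          + (‖w (n+1)‖ ^ 2 / (1 - (‖z (n+1)‖) ^ 2)))
      + (‖w n‖ ^ 2 / (1 - (‖z n‖) ^ 2))
          * (‖w (n+1)‖ ^ 2 / (1 - (‖z (n+1)‖) ^ 2))))
    · refine Filter.Eventually.of_forall fun n => ?_
      refine lower_ineq (‖z n‖) ‖w n‖ (‖z (n+1)‖) ‖w (n+1)‖
        (‖z n * (starRingEnd ℂ) (z (n+1)) + (inner ℂ (w (n+1)) (w n) : ℂ)‖)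
        (‖1 - (z n * (starRingEnd ℂ) (z (n+1)) + (inner ℂ (w (n+1)) (w n) : ℂ))‖) _
        (hball n) (hball (n+1)) (norm_nonneg _) (hcn n) ?_ (norm_nonneg _) rfl
      · have h1 : (1:ℝ) = ‖(1:ℂ)‖ := by simp
        have hid : (1:ℂ) = (1 - (z n * (starRingEnd ℂ) (z (n+1)) + (inner ℂ (w (n+1)) (w n) : ℂ)))
            + (z n * (starRingEnd ℂ) (z (n+1)) + (inner ℂ (w (n+1)) (w n) : ℂ)) := by ring
        have h2 := norm_add_le
          (1 - (z n * (starRingEnd ℂ) (z (n+1)) + (inner ℂ (w (n+1)) (w n) : ℂ)))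
          (z n * (starRingEnd ℂ) (z (n+1)) + (inner ℂ (w (n+1)) (w n) : ℂ))
        rw [← hid] at h2
        simp only [norm_one] at h2
        linarith
    · have hev1 := hspecial.eventually_lt_const (by norm_num : (0:ℝ) < 1/100)
      have hev2 := hEtend'.eventually_lt_const (by norm_num : (0:ℝ) < 1/100)
      have hev3 := hStend.eventually_lt_const
        (by positivity : (0:ℝ) < 1/(8*(M+1)^2))
      filter_upwards [hev1, hev2, hev3] with n h1 h2 h3
      exact main_ineq M (1 - (z n).re) (1 - (z (n+1)).re)
        (‖1 - z n‖) (‖1 - z (n+1)‖)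
        (‖z n‖) (‖z (n+1)‖) ‖w n‖ ‖w (n+1)‖
        (‖w n‖ ^ 2 / (1 - (‖z n‖) ^ 2))
        (‖w (n+1)‖ ^ 2 / (1 - (‖z (n+1)‖) ^ 2))
        (‖(1 - z (n+1))/(1 - z n) - 1‖)
        (‖1 - z n * (starRingEnd ℂ) (z (n+1))‖)
        (‖(inner ℂ (w (n+1)) (w n) : ℂ)‖)
        (‖1 - (z n * (starRingEnd ℂ) (z (n+1)) + (inner ℂ (w (n+1)) (w n) : ℂ))‖) _
        hM (hrepos n) (hrepos (n+1)) (htM n) (htM (n+1)) (hst n) (hst (n+1))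
        (hE0 n) (hE0 (n+1)) (hp2 n) (hp2 (n+1)) (hq2 n) (hq2 (n+1))
        (sq_nonneg _) (sq_nonneg _) (norm_nonneg _)
        (by nlinarith [hmun n, norm_nonneg (inner ℂ (w (n+1)) (w n) : ℂ),
          norm_nonneg (w n), norm_nonneg (w (n+1))])
        (norm_nonneg _) (hLn n)
        (by linarith [hren n]) (hABLn n) rfl (hball (n+1)) (hp2pos n)
        (hdiskn n) (norm_nonneg _) h1.le h2.le h3.le
    · have h := ((hRtend.pow 2).const_mul (M^2)).add
        (((hspecial.add hEtend').const_mul (2*M+3)).add (hspecial.mul hEtend'))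
      have h2 := h.const_mul 4
      have h3 : Tendsto (fun n => 4*(M^2*(‖(1 - z (n+1))/(1 - z n) - 1‖)^2
          + (2*M+3)*((‖w n‖ ^ 2 / (1 - (‖z n‖) ^ 2))
              + (‖w (n+1)‖ ^ 2 / (1 - (‖z (n+1)‖) ^ 2)))
          + (‖w n‖ ^ 2 / (1 - (‖z n‖) ^ 2))
              * (‖w (n+1)‖ ^ 2 / (1 - (‖z (n+1)‖) ^ 2))))
          atTop (nhds (4 * (M ^ 2 * 0 ^ 2 + ((2 * M + 3) * (0 + 0) + 0 * 0)))) :=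
        h2.congr (fun k => by ring)
      simpa using h3
  have hfin := (Real.continuous_sqrt.tendsto 0).comp hmain
  simpa [Function.comp_def, Real.sqrt_zero] using hfin
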